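/- Let $\lambda \in L^\infty(\mathcal{F}_s)$ take values in $[0, C)$ and define the hitting time $\sigma(s, \lambda) := \inf\{\theta \ge 1 : \gamma(s+\theta) > \lambda\}$. Then for every stopping time $\tau \in \mathcal{T}(s)$, $V(\tau, \lambda) \ge V(\tau \wedge \sigma(s,\lambda), \lambda)$, where $V(\tau, \lambda) = \mathcal{E}(\sum_{t=1}^{\tau} \beta^t(h(s+t) - \lambda) \mid \mathcal{F}_s)$. -/

import Mathlib

open MeasureTheory Filter Classical Finset

variable {Ω : Type*} [MeasurableSpace Ω]

/-- An `(ℱ t)`-consistent coherent nonlinear expectation (Definition 2.2). -/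
structure ConsistentCNE (μ : Measure Ω) (ℱ : ℕ → MeasurableSpace Ω)
    (E : ℕ → (Ω → ℝ) → (Ω → ℝ)) : Prop where
  adapted : ∀ t X, Measurable[ℱ t] (E t X)
  mono : ∀ t (X Y : Ω → ℝ), Y ≤ᵐ[μ] X → E t Y ≤ᵐ[μ] E t X
  strictMono : ∀ t (X Y : Ω → ℝ), Y ≤ᵐ[μ] X → E t X =ᵐ[μ] E t Y → X =ᵐ[μ] Y
  transl : ∀ t (X c : Ω → ℝ), Measurable[ℱ t] c →
      E t (fun ω => X ω + c ω) =ᵐ[μ] fun ω => E t X ω + c ω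
  normalized : ∀ t, E t (fun _ => 0) =ᵐ[μ] fun _ => 0
  subadd : ∀ t (X Y : Ω → ℝ),
      E t (fun ω => X ω + Y ω) ≤ᵐ[μ] fun ω => E t X ω + E t Y ω
  posHom : ∀ t (X lam : Ω → ℝ), Measurable[ℱ t] lam → (∀ᵐ ω ∂μ, 0 ≤ lam ω) →
      E t (fun ω => lam ω * X ω) =ᵐ[μ] fun ω => lam ω * E t X ω
  lebesgue : ∀ t (Xn : ℕ → Ω → ℝ) (X : Ω → ℝ) (K : ℝ),
      (∀ n, ∀ᵐ ω ∂μ, |Xn n ω| ≤ K) →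
      (∀ᵐ ω ∂μ, Tendsto (fun n => Xn n ω) atTop (nhds (X ω))) →
      ∀ᵐ ω ∂μ, Tendsto (fun n => E t (Xn n) ω) atTop (nhds (E t X ω))
  tower : ∀ s t (X : Ω → ℝ), s ≤ t → E s X =ᵐ[μ] E s (E t X)

/-- `𝒯(s)`: the bounded positive `(ℱ (s+t))`-stopping times. -/
def stopTimes (ℱ : ℕ → MeasurableSpace Ω) (s : ℕ) : Set (Ω → ℕ) :=
  {τ | (∀ ω, 1 ≤ τ ω) ∧ (∃ B, ∀ ω, τ ω ≤ B) ∧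
    ∀ n, MeasurableSet[ℱ (s + n)] {ω | τ ω = n}}

/-- The optimal-stopping value
`V(τ, λ) = 𝓔(∑_{t=1}^{τ} β^t (h(s+t) - λ) | ℱ_s)`. -/
noncomputable def banditV (E : ℕ → (Ω → ℝ) → (Ω → ℝ)) (h : ℕ → Ω → ℝ) (β : ℝ)
    (s : ℕ) (τ : Ω → ℕ) (lam : Ω → ℝ) : Ω → ℝ :=
  E s (fun ω => ∑ t ∈ Finset.Icc 1 (τ ω), β ^ t * (h (s + t) ω - lam ω))

/-- The hitting time `σ(s, λ) = inf {θ ≥ 1 : γ(s + θ) > λ}` of the Gittins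
index process above a level `λ < C` (Definition 4.1). -/
noncomputable def hitTime (γ : ℕ → Ω → ℝ) (s : ℕ) (lam : Ω → ℝ) : Ω → ℕ :=
  fun ω => sInf {θ : ℕ | 1 ≤ θ ∧ lam ω < γ (s + θ) ω}

private lemma sum_Icc_split (f : ℕ → ℝ) {n m : ℕ} (h : n ≤ m) :
    ∑ t ∈ Finset.Icc 1 m, f t
      = (∑ t ∈ Finset.Icc 1 n, f t) + ∑ u ∈ Finset.Icc 1 (m - n), f (n + u) := by
  have h1 : ∀ k, Finset.Icc 1 k = Finset.Ioc 0 k := fun k => by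
    rw [← Finset.Icc_add_one_left_eq_Ioc, zero_add]
  rw [h1, h1, h1, ← Finset.sum_Ioc_consecutive f (Nat.zero_le n) h]
  congr 1
  have h2 : Finset.Ioc n m = (Finset.Ioc 0 (m - n)).map (addLeftEmbedding n) := by
    rw [Finset.map_add_left_Ioc]
    congr 1
    omega
  rw [h2, Finset.sum_map]
  rfl

private lemma CNE_const {μ : Measure Ω} {ℱ : ℕ → MeasurableSpace Ω}
    {E : ℕ → (Ω → ℝ) → (Ω → ℝ)} (hE : ConsistentCNE μ ℱ E) (t : ℕ) (c : Ω → ℝ)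
    (hc : Measurable[ℱ t] c) : E t c =ᵐ[μ] c := by
  have h1 := hE.transl t (fun _ => 0) c hc
  have h3 : (fun ω => (0:ℝ) + c ω) = c := by funext ω; simp
  rw [h3] at h1
  filter_upwards [h1, hE.normalized t] with ω e1 e2
  rw [e1, e2]
  simp

private lemma CNE_local {μ : Measure Ω} {ℱ : ℕ → MeasurableSpace Ω}
    {E : ℕ → (Ω → ℝ) → (Ω → ℝ)} (hE : ConsistentCNE μ ℱ E) (t : ℕ) (A : Set Ω)
    (hA : MeasurableSet[ℱ t] A) (X W : Ω → ℝ) :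
    E t (fun ω => A.indicator (fun _ => (1:ℝ)) ω * X ω + Aᶜ.indicator (fun _ => (1:ℝ)) ω * W ω)
      =ᵐ[μ] fun ω => A.indicator (fun _ => (1:ℝ)) ω * E t X ω
        + Aᶜ.indicator (fun _ => (1:ℝ)) ω * E t W ω := by
  set χ := A.indicator (fun _ => (1:ℝ)) with hχdef
  set χc := Aᶜ.indicator (fun _ => (1:ℝ)) with hχcdef
  set Z := fun ω => χ ω * X ω + χc ω * W ω with hZ
  have hχm : Measurable[ℱ t] χ := measurable_const.indicator hA
  have hχcm : Measurable[ℱ t] χc := measurable_const.indicator hA.compl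
  have hχ0 : ∀ ω, 0 ≤ χ ω := fun ω => Set.indicator_nonneg (fun _ _ => zero_le_one) ω
  have hχc0 : ∀ ω, 0 ≤ χc ω := fun ω => Set.indicator_nonneg (fun _ _ => zero_le_one) ω
  have e1 := hE.posHom t Z χ hχm (.of_forall hχ0)
  have e2 := hE.posHom t Z χc hχcm (.of_forall hχc0)
  have e3 := hE.posHom t X χ hχm (.of_forall hχ0)
  have e4 := hE.posHom t W χc hχcm (.of_forall hχc0)
  have hx : (fun ω => χ ω * Z ω) = fun ω => χ ω * X ω := by
    funext ω
    by_cases hω : ω ∈ A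
    · simp [hZ, hχdef, hχcdef, Set.indicator_of_mem hω,
        Set.indicator_of_notMem (show ω ∉ Aᶜ by simpa using hω)]
    · simp [hχdef, Set.indicator_of_notMem hω]
  have hw : (fun ω => χc ω * Z ω) = fun ω => χc ω * W ω := by
    funext ω
    by_cases hω : ω ∈ A
    · simp [hχcdef, Set.indicator_of_notMem (show ω ∉ Aᶜ by simpa using hω)]
    · simp [hZ, hχdef, hχcdef, Set.indicator_of_mem (show ω ∈ Aᶜ from hω),
        Set.indicator_of_notMem hω]
  rw [hx] at e1
  rw [hw] at e2
  filter_upwards [e1, e2, e3, e4] with ω a1 a2 a3 a4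
  have hsum : χ ω + χc ω = 1 := by
    by_cases hω : ω ∈ A
    · simp [hχdef, hχcdef, Set.indicator_of_mem hω,
        Set.indicator_of_notMem (show ω ∉ Aᶜ by simpa using hω)]
    · simp [hχdef, hχcdef, Set.indicator_of_notMem hω,
        Set.indicator_of_mem (show ω ∈ Aᶜ from hω)]
  calc E t Z ω = (χ ω + χc ω) * E t Z ω := by rw [hsum, one_mul]
    _ = χ ω * E t Z ω + χc ω * E t Z ω := add_mul _ _ _
    _ = χ ω * E t X ω + χc ω * E t W ω := by rw [← a1, a3, ← a2, a4]

/-- **Lemma 4.1.**  For `λ ∈ L^∞(ℱ_s)` with values in `[0, C)` and the hitting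
time `σ(s,λ) = inf {θ ≥ 1 : γ(s+θ) > λ}`, for every `τ ∈ 𝒯(s)` we have
`V(τ ∧ σ(s,λ), λ) ≤ V(τ, λ)`. -/
theorem stmt6 (μ : Measure Ω) [IsProbabilityMeasure μ]
    (ℱ : ℕ → MeasurableSpace Ω) (hℱmono : Monotone ℱ)
    (hℱle : ∀ t, ℱ t ≤ ‹MeasurableSpace Ω›)
    (E : ℕ → (Ω → ℝ) → (Ω → ℝ)) (hE : ConsistentCNE μ ℱ E)
    (T : ℕ) (C : ℝ) (hC : 0 < C) (β : ℝ) (hβ : β ∈ Set.Ioo (0 : ℝ) 1)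
    (h : ℕ → Ω → ℝ) (hhAdapted : ∀ t, Measurable[ℱ t] (h t))
    (hhBdd : ∀ t, t ≤ T → ∀ ω, 0 ≤ h t ω ∧ h t ω < C)
    (hhC : ∀ t, T < t → ∀ ω, h t ω = C)
    -- the robust Gittins index process
    (γ : ℕ → Ω → ℝ) (hγAdapted : ∀ t, Measurable[ℱ t] (γ t))
    (hγBdd : ∀ t, t < T → ∀ ω, 0 ≤ γ t ω ∧ γ t ω < C)
    (hγC : ∀ t, T ≤ t → ∀ ω, γ t ω = C)
    -- known: `V(τ, γ(s')) ≥ 0` for all `τ ∈ 𝒯(s')` (Corollary 4.1)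
    (hknown : ∀ s', ∀ τ ∈ stopTimes ℱ s',
      (0 : Ω → ℝ) ≤ᵐ[μ] banditV E h β s' τ (γ s'))
    (s : ℕ) (lam : Ω → ℝ) (hlamMeas : Measurable[ℱ s] lam)
    (hlam : ∀ ω, 0 ≤ lam ω ∧ lam ω < C) :
    ∀ τ ∈ stopTimes ℱ s,
      banditV E h β s (fun ω => min (τ ω) (hitTime γ s lam ω)) lam
        ≤ᵐ[μ] banditV E h β s τ lam := by
  intro τ hτ
  obtain ⟨hτ1, ⟨B, hτB⟩, hτmeas⟩ := hτ
  have hβ0 : 0 ≤ β := le_of_lt hβ.1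
  set σ : Ω → ℕ := hitTime γ s lam with hσdef
  set N : ℕ := max 1 (T - s) with hNdef
  have hσ_sInf : ∀ ω, σ ω = sInf {θ : ℕ | 1 ≤ θ ∧ lam ω < γ (s + θ) ω} := fun ω => rfl
  have hNmem : ∀ ω, N ∈ {θ : ℕ | 1 ≤ θ ∧ lam ω < γ (s + θ) ω} := by
    intro ω
    refine ⟨le_max_left _ _, ?_⟩
    rw [hγC (s + N) (by omega) ω]
    exact (hlam ω).2
  have hσmem : ∀ ω, 1 ≤ σ ω ∧ lam ω < γ (s + σ ω) ω := by
    intro ω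
    rw [hσ_sInf ω]
    exact Nat.sInf_mem ⟨N, hNmem ω⟩
  have hσN : ∀ ω, σ ω ≤ N := by
    intro ω
    rw [hσ_sInf ω]
    exact Nat.sInf_le (hNmem ω)
  have hσchar : ∀ n, 1 ≤ n → ∀ ω,
      (σ ω = n ↔ (lam ω < γ (s + n) ω ∧ ∀ m, 1 ≤ m → m < n → ¬ lam ω < γ (s + m) ω)) := by
    intro n hn ω
    constructor
    · intro hσn
      refine ⟨by rw [← hσn]; exact (hσmem ω).2, ?_⟩
      intro m h1 hmn hlt
      have h2 : σ ω ≤ m := by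
        rw [hσ_sInf ω]; exact Nat.sInf_le ⟨h1, hlt⟩
      omega
    · rintro ⟨h1, h2⟩
      have hle : σ ω ≤ n := by
        rw [hσ_sInf ω]; exact Nat.sInf_le ⟨hn, h1⟩
      by_contra hne
      exact h2 (σ ω) (hσmem ω).1 (by omega) (hσmem ω).2
  have hmono' : ∀ {a b : ℕ}, a ≤ b → ∀ {s' : Set Ω},
      MeasurableSet[ℱ a] s' → MeasurableSet[ℱ b] s' :=
    fun hab _ hs => hℱmono hab _ hs
  have hfun' : ∀ {a b : ℕ}, a ≤ b → ∀ {f : Ω → ℝ},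
      Measurable[ℱ a] f → Measurable[ℱ b] f :=
    fun hab _ hf => hf.mono (hℱmono hab) le_rfl
  have hτle : ∀ k, MeasurableSet[ℱ (s + k)] {ω | τ ω ≤ k} := by
    intro k
    have hq : {ω | τ ω ≤ k} = ⋃ j ∈ Finset.range (k + 1), {ω | τ ω = j} := by
      ext ω
      simp only [Set.mem_setOf_eq, Set.mem_iUnion, Finset.mem_range]
      constructor
      · intro hk; exact ⟨τ ω, by omega, rfl⟩
      · rintro ⟨j, hj, hje⟩; omega
    rw [hq]
    exact (Finset.range (k + 1)).measurableSet_biUnion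
      (fun j hj => hmono' (by simp only [Finset.mem_range] at hj; omega) (hτmeas j))
  have hτgt : ∀ k, MeasurableSet[ℱ (s + k)] {ω | k < τ ω} := by
    intro k
    have hq : {ω | k < τ ω} = {ω | τ ω ≤ k}ᶜ := by
      ext ω; simp [Set.mem_setOf_eq]
    rw [hq]
    exact (hτle k).compl
  -- the main objects
  set tr : ℕ → Ω → ℝ := fun k ω => ∑ t ∈ Finset.Icc 1 k, β ^ t * (h (s + t) ω - lam ω)
    with htrdef
  set A : ℕ → Set Ω := fun n => {ω | σ ω = n ∧ n < τ ω} with hAdef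
  set χ : ℕ → Ω → ℝ := fun n => (A n).indicator (fun _ => (1:ℝ)) with hχdef
  set τ' : ℕ → Ω → ℕ := fun n ω => if n < τ ω then τ ω - n else 1 with hτ'def
  set R : ℕ → Ω → ℝ :=
    fun n ω => β ^ n * ∑ u ∈ Finset.Icc 1 (τ' n ω), β ^ u * (h (s + n + u) ω - lam ω)
    with hRdef
  set Y : ℕ → Ω → ℝ :=
    fun k ω => tr (min (τ ω) (σ ω)) ω + ∑ n ∈ Finset.Icc 1 k, χ n ω * R n ω with hYdef
  have htrmeas : ∀ k, Measurable[ℱ (s + k)] (tr k) := by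
    intro k
    rw [htrdef]
    apply Finset.measurable_sum
    intro t ht
    simp only [Finset.mem_Icc] at ht
    exact (Measurable.sub (hfun' (by omega) (hhAdapted (s + t)))
      (hfun' (by omega) hlamMeas)).const_mul _
  have hAmeas : ∀ n, MeasurableSet[ℱ (s + (n + 1))] (A (n + 1)) := by
    intro n
    have heq : A (n + 1)
        = (({ω | lam ω < γ (s + (n + 1)) ω}
            ∩ ⋂ m ∈ Finset.Ico 1 (n + 1), {ω | lam ω < γ (s + m) ω}ᶜ)
          ∩ {ω | (n + 1) < τ ω}) := by
      ext ω
      simp only [hAdef, Set.mem_setOf_eq, Set.mem_inter_iff, Set.mem_iInter,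
        Finset.mem_Ico, Set.mem_compl_iff]
      rw [hσchar (n + 1) (by omega) ω]
      constructor
      · rintro ⟨⟨h1, h2⟩, h3⟩
        exact ⟨⟨h1, fun m hm => h2 m hm.1 hm.2⟩, h3⟩
      · rintro ⟨⟨h1, h2⟩, h3⟩
        exact ⟨⟨h1, fun m hm1 hm2 => h2 m ⟨hm1, hm2⟩⟩, h3⟩
    rw [heq]
    refine MeasurableSet.inter (MeasurableSet.inter ?_ ?_) (hτgt (n + 1))
    · exact measurableSet_lt (hfun' (Nat.le_add_right s (n + 1)) hlamMeas)
        (hγAdapted (s + (n + 1)))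
    · refine Finset.measurableSet_biInter _ (fun m hm => ?_)
      simp only [Finset.mem_Ico] at hm
      refine hmono' (show s + m ≤ s + (n + 1) by omega) ?_
      exact (measurableSet_lt (hfun' (Nat.le_add_right s m) hlamMeas)
        (hγAdapted (s + m))).compl
  have hτ'mem : ∀ n, τ' n ∈ stopTimes ℱ (s + n) := by
    intro n
    refine ⟨fun ω => ?_, ⟨max B 1, fun ω => ?_⟩, fun m => ?_⟩
    · simp only [hτ'def]
      by_cases hc : n < τ ω <;> simp [hc] <;> omega
    · simp only [hτ'def]
      by_cases hc : n < τ ω <;> simp [hc]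
      · have := hτB ω; left; omega
    · by_cases hm : m = 1
      · subst hm
        have heq : {ω | τ' n ω = 1} = {ω | τ ω ≤ n} ∪ {ω | τ ω = n + 1} := by
          ext ω
          simp only [hτ'def, Set.mem_setOf_eq, Set.mem_union]
          by_cases hc : n < τ ω <;> simp [hc] <;> omega
        rw [heq]
        exact MeasurableSet.union (hmono' (by omega) (hτle n))
          (by
            have := hτmeas (n + 1)
            rw [show s + n + 1 = s + (n + 1) by omega]
            exact this)
      · have heq : {ω | τ' n ω = m} = {ω | τ ω = n + m} ∩ {ω | n < τ ω} := by
          ext ω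
          simp only [hτ'def, Set.mem_setOf_eq, Set.mem_inter_iff]
          by_cases hc : n < τ ω <;> simp [hc] <;> omega
        rw [heq]
        refine MeasurableSet.inter ?_ (hmono' (by omega) (hτgt n))
        rw [show s + n + m = s + (n + m) by omega]
        exact hτmeas (n + m)
  -- pointwise facts
  have hminA : ∀ n ω, ω ∈ A n → min (τ ω) (σ ω) = n := by
    intro n ω hω
    simp only [hAdef, Set.mem_setOf_eq] at hω
    omega
  have hsum_vanish : ∀ k ω, τ ω ≤ σ ω → ∑ n ∈ Finset.Icc 1 k, χ n ω * R n ω = 0 := by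
    intro k ω hω
    apply Finset.sum_eq_zero
    intro n hn
    have hnot : ω ∉ A n := by
      simp only [hAdef, Set.mem_setOf_eq]
      rintro ⟨h1, h2⟩; omega
    simp [hχdef, Set.indicator_of_notMem hnot]
  have hsum_zero_ne : ∀ k ω, (∀ n, 1 ≤ n → n ≤ k → σ ω ≠ n) →
      ∑ n ∈ Finset.Icc 1 k, χ n ω * R n ω = 0 := by
    intro k ω hω
    apply Finset.sum_eq_zero
    intro n hn
    simp only [Finset.mem_Icc] at hn
    have hnot : ω ∉ A n := by
      simp only [hAdef, Set.mem_setOf_eq]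
      rintro ⟨h1, h2⟩
      exact hω n hn.1 hn.2 h1
    simp [hχdef, Set.indicator_of_notMem hnot]
  have hsum_single : ∀ k ω, σ ω < τ ω → σ ω ≤ k →
      ∑ n ∈ Finset.Icc 1 k, χ n ω * R n ω = R (σ ω) ω := by
    intro k ω h1 h2
    rw [Finset.sum_eq_single_of_mem (σ ω)
      (by simp only [Finset.mem_Icc]; exact ⟨(hσmem ω).1, h2⟩)]
    · have hω : ω ∈ A (σ ω) := by
        rw [hAdef]; exact Set.mem_setOf.mpr ⟨rfl, h1⟩
      simp [hχdef, Set.indicator_of_mem hω]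
    · intro n hn hne
      have hnot : ω ∉ A n := by
        simp only [hAdef, Set.mem_setOf_eq]
        rintro ⟨he, _⟩; exact hne he.symm
      simp [hχdef, Set.indicator_of_notMem hnot]
  have hY0 : Y 0 = fun ω => tr (min (τ ω) (σ ω)) ω := by
    funext ω
    simp [hYdef]
  have hYN : Y N = fun ω => ∑ t ∈ Finset.Icc 1 (τ ω), β ^ t * (h (s + t) ω - lam ω) := by
    funext ω
    simp only [hYdef]
    rcases le_or_gt (τ ω) (σ ω) with hc | hc
    · rw [hsum_vanish N ω hc, min_eq_left hc, add_zero]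
    · rw [hsum_single N ω hc (hσN ω), min_eq_right (le_of_lt hc)]
      simp only [htrdef, hRdef, hτ'def, if_pos hc]
      rw [sum_Icc_split (fun t => β ^ t * (h (s + t) ω - lam ω)) (le_of_lt hc)]
      congr 1
      rw [Finset.mul_sum]
      refine Finset.sum_congr rfl (fun u _ => ?_)
      rw [← add_assoc, ← mul_assoc, ← pow_add]
  have hYrec : ∀ k, Y (k + 1) = fun ω => χ (k + 1) ω * (tr (k + 1) ω + R (k + 1) ω)
      + (A (k + 1))ᶜ.indicator (fun _ => (1:ℝ)) ω * Y k ω := by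
    intro k
    funext ω
    by_cases hω : ω ∈ A (k + 1)
    · have h1 : σ ω = k + 1 ∧ k + 1 < τ ω := hω
      simp only [hYdef, hχdef, Set.indicator_of_mem hω,
        Set.indicator_of_notMem (show ω ∉ (A (k + 1))ᶜ by simpa using hω),
        one_mul, zero_mul, add_zero]
      rw [hminA _ _ hω, hsum_single (k + 1) ω (by omega) (by omega), h1.1]
    · simp only [hYdef, hχdef, Set.indicator_of_notMem hω,
        Set.indicator_of_mem (show ω ∈ (A (k + 1))ᶜ from hω), zero_mul, one_mul, zero_add]
      rw [Finset.sum_Icc_succ_top (by omega : 1 ≤ k + 1)]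
      simp [hχdef, Set.indicator_of_notMem hω]
  have hYalt : ∀ k, Y k = fun ω => χ (k + 1) ω * tr (k + 1) ω
      + (A (k + 1))ᶜ.indicator (fun _ => (1:ℝ)) ω * Y k ω := by
    intro k
    funext ω
    by_cases hω : ω ∈ A (k + 1)
    · have h1 : σ ω = k + 1 ∧ k + 1 < τ ω := hω
      have hz : ∑ n ∈ Finset.Icc 1 k, χ n ω * R n ω = 0 :=
        hsum_zero_ne k ω (fun n hn1 hn2 he => by omega)
      simp only [hYdef, hχdef, Set.indicator_of_mem hω,
        Set.indicator_of_notMem (show ω ∉ (A (k + 1))ᶜ by simpa using hω),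
        one_mul, zero_mul, add_zero]
      rw [hminA _ _ hω, hz, add_zero]
    · simp only [hχdef, Set.indicator_of_notMem hω,
        Set.indicator_of_mem (show ω ∈ (A (k + 1))ᶜ from hω), zero_mul, one_mul, zero_add]
  -- the inductive step
  have hstep : ∀ k, E s (Y k) ≤ᵐ[μ] E s (Y (k + 1)) := by
    intro k
    have hAm : MeasurableSet[ℱ (s + (k + 1))] (A (k + 1)) := hAmeas k
    have hχm : Measurable[ℱ (s + (k + 1))] (χ (k + 1)) := by
      rw [hχdef]
      exact measurable_const.indicator hAm
    have hχ0 : ∀ ω, 0 ≤ χ (k + 1) ω := by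
      intro ω
      rw [hχdef]
      exact Set.indicator_nonneg (fun _ _ => zero_le_one) ω
    have loc1 : E (s + (k + 1)) (Y (k + 1)) =ᵐ[μ]
        fun ω => χ (k + 1) ω * E (s + (k + 1)) (fun ω' => tr (k + 1) ω' + R (k + 1) ω') ω
          + (A (k + 1))ᶜ.indicator (fun _ => (1:ℝ)) ω * E (s + (k + 1)) (Y k) ω := by
      rw [hYrec k, hχdef]
      exact CNE_local hE (s + (k + 1)) (A (k + 1)) hAm _ _
    have loc2 : E (s + (k + 1)) (Y k) =ᵐ[μ]
        fun ω => χ (k + 1) ω * E (s + (k + 1)) (tr (k + 1)) ω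
          + (A (k + 1))ᶜ.indicator (fun _ => (1:ℝ)) ω * E (s + (k + 1)) (Y k) ω := by
      conv_lhs => rw [hYalt k]
      rw [hχdef]
      exact CNE_local hE (s + (k + 1)) (A (k + 1)) hAm _ _
    have htrconst : E (s + (k + 1)) (tr (k + 1)) =ᵐ[μ] tr (k + 1) :=
      CNE_const hE _ _ (htrmeas (k + 1))
    have htrans : E (s + (k + 1)) (fun ω => tr (k + 1) ω + R (k + 1) ω) =ᵐ[μ]
        fun ω => E (s + (k + 1)) (R (k + 1)) ω + tr (k + 1) ω := by
      have h0 := hE.transl (s + (k + 1)) (R (k + 1)) (tr (k + 1)) (htrmeas (k + 1))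
      have heq : (fun ω => R (k + 1) ω + tr (k + 1) ω)
          = fun ω => tr (k + 1) ω + R (k + 1) ω := by
        funext ω; ring
      rw [heq] at h0
      exact h0
    -- positivity of χ * E R
    set W : Ω → ℝ := fun ω => ∑ u ∈ Finset.Icc 1 (τ' (k + 1) ω),
      β ^ u * (h (s + (k + 1) + u) ω - γ (s + (k + 1)) ω) with hWdef
    have hknow : (0 : Ω → ℝ) ≤ᵐ[μ] E (s + (k + 1)) W := by
      have h0 := hknown (s + (k + 1)) (τ' (k + 1)) (hτ'mem (k + 1))
      simpa only [banditV, hWdef] using h0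
    set m : Ω → ℝ := fun ω => χ (k + 1) ω * β ^ (k + 1) with hmdef
    have hmm : Measurable[ℱ (s + (k + 1))] m := hχm.mul_const _
    have hm0 : ∀ ω, 0 ≤ m ω := fun ω => mul_nonneg (hχ0 ω) (pow_nonneg hβ0 _)
    have ph1 := hE.posHom (s + (k + 1)) W m hmm (.of_forall hm0)
    have ph2 := hE.posHom (s + (k + 1)) (R (k + 1)) (χ (k + 1)) hχm (.of_forall hχ0)
    have hle : (fun ω => m ω * W ω) ≤ᵐ[μ] fun ω => χ (k + 1) ω * R (k + 1) ω := by
      refine Filter.Eventually.of_forall (fun ω => ?_)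
      by_cases hω : ω ∈ A (k + 1)
      · have h1 : σ ω = k + 1 ∧ k + 1 < τ ω := hω
        have hγlam : lam ω < γ (s + (k + 1)) ω := by
          have := (hσmem ω).2
          rwa [h1.1] at this
        have hχ1 : χ (k + 1) ω = 1 := by
          rw [hχdef]; exact Set.indicator_of_mem hω _
        simp only [hmdef, hχ1, one_mul, hRdef, hWdef]
        refine mul_le_mul_of_nonneg_left ?_ (pow_nonneg hβ0 _)
        refine Finset.sum_le_sum (fun u _ => ?_)
        refine mul_le_mul_of_nonneg_left ?_ (pow_nonneg hβ0 _)
        exact sub_le_sub_left (le_of_lt hγlam) _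
      · have hχz : χ (k + 1) ω = 0 := by
          rw [hχdef]; exact Set.indicator_of_notMem hω _
        simp [hmdef, hχz]
    have emono := hE.mono (s + (k + 1)) _ _ hle
    have hχER : (0 : Ω → ℝ) ≤ᵐ[μ] fun ω => χ (k + 1) ω * E (s + (k + 1)) (R (k + 1)) ω := by
      filter_upwards [ph1, ph2, emono, hknow] with ω a1 a2 a3 a4
      have h4 : (0:ℝ) ≤ E (s + (k + 1)) W ω := a4
      have h5 : (0:ℝ) ≤ m ω * E (s + (k + 1)) W ω := mul_nonneg (hm0 ω) h4
      rw [← a1] at h5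
      have h6 := le_trans h5 a3
      rw [a2] at h6
      exact h6
    have hEt : E (s + (k + 1)) (Y k) ≤ᵐ[μ] E (s + (k + 1)) (Y (k + 1)) := by
      filter_upwards [loc1, loc2, htrconst, htrans, hχER] with ω e1 e2 e3 e4 e5
      have h5 : (0:ℝ) ≤ χ (k + 1) ω * E (s + (k + 1)) (R (k + 1)) ω := e5
      rw [e1, e4]
      by_cases hω : ω ∈ A (k + 1)
      · have hχ1 : χ (k + 1) ω = 1 := by rw [hχdef]; exact Set.indicator_of_mem hω _
        have hc0 : (A (k + 1))ᶜ.indicator (fun _ => (1:ℝ)) ω = 0 :=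
          Set.indicator_of_notMem (by simpa using hω) _
        rw [hχ1, hc0] at e2 ⊢
        rw [hχ1] at h5
        rw [e2, e3]
        linarith
      · have hχz : χ (k + 1) ω = 0 := by rw [hχdef]; exact Set.indicator_of_notMem hω _
        have hc1 : (A (k + 1))ᶜ.indicator (fun _ => (1:ℝ)) ω = 1 :=
          Set.indicator_of_mem (show ω ∈ (A (k + 1))ᶜ from hω) _
        rw [hχz, hc1]
        linarith
    calc E s (Y k) =ᵐ[μ] E s (E (s + (k + 1)) (Y k)) := hE.tower s (s + (k + 1)) _ (by omega)
      _ ≤ᵐ[μ] E s (E (s + (k + 1)) (Y (k + 1))) := hE.mono s _ _ hEt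
      _ =ᵐ[μ] E s (Y (k + 1)) := (hE.tower s (s + (k + 1)) _ (by omega)).symm
  have hchain : ∀ k, E s (Y 0) ≤ᵐ[μ] E s (Y k) := by
    intro k
    induction k with
    | zero => exact Filter.EventuallyLE.refl _ _
    | succ k ih => exact ih.trans (hstep k)
  have hL : banditV E h β s (fun ω => min (τ ω) (σ ω)) lam = E s (Y 0) := by
    rw [hY0]
    simp only [banditV, htrdef]
  have hR' : banditV E h β s τ lam = E s (Y N) := by
    rw [hYN]
    simp only [banditV]
  rw [hL, hR']
  exact hchain N
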